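/- arXiv:1805.01953 — 2 statements merged into one kernel-verified Lean document; each statement's English description precedes it below -/
import Mathlib

section
/- Let G be a minimally bad graph and O a bad connected order of G with greedy colouring π = π_{G,O}. Let k ≥ 2 and S = {s_1,…,s_k} ⊆ V(G) with s_1 < … < s_k, where s_k is adjacent to each of s_1,…,s_{k−1}. Let a_1,…,a_k ∈ V(G)∖S be k distinct vertices, each of degree 2 in G, with N(a_i) ∩ S = {s_i} for each i. Suppose that for i = 1,…,k−1, N(s_i)∖{a_i,s_k} ⊆ N(s_k). If a_k < s_k then: (1) for every v ∈ N(s_k)∖{a_k} with v < s_k, π(v) ≠ π(a_k); (2) π(a_1) = … = π(a_k) = 1 or π(a_1) = … = π(a_k) = 2; in particular, {a_1,…,a_k} is a stable set of G. -/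
open Classical in
noncomputable def greedyStep {V : Type*} (G : SimpleGraph V) (f : V → ℕ) (v : V) : V → ℕ :=
  fun u => if u = v then sInf {c : ℕ | 1 ≤ c ∧ ∀ w, G.Adj v w → f w ≠ c} else f u

noncomputable def greedyFrom {V : Type*} (G : SimpleGraph V) (f : V → ℕ) (l : List V) : V → ℕ :=
  l.foldl (greedyStep G) f

noncomputable def greedy {V : Type*} (G : SimpleGraph V) (l : List V) : V → ℕ :=
  greedyFrom G (fun _ => 0) l

open Classical in
noncomputable def greedyStart2 {V : Type*} (G : SimpleGraph V) : List V → V → ℕ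
  | [] => fun _ => 0
  | v :: rest => greedyFrom G (fun u => if u = v then 2 else 0) rest

noncomputable def chi {V : Type*} [Fintype V] (G : SimpleGraph V) : ℕ :=
  sInf {n : ℕ | G.Colorable n}

open Classical in
noncomputable def idx {V : Type*} (l : List V) (v : V) : ℕ := l.idxOf v

noncomputable def maxIdx {V : Type*} (l : List V) (A : Set V) : ℕ := sSup (idx l '' A)
noncomputable def minIdx {V : Type*} (l : List V) (A : Set V) : ℕ := sInf (idx l '' A)

def IsConnOrder {V : Type*} (G : SimpleGraph V) (l : List V) : Prop :=
  l.Nodup ∧ (∀ v : V, v ∈ l) ∧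
    ∀ i : Fin l.length, 0 < i.1 → ∃ j : Fin l.length, j.1 < i.1 ∧ G.Adj (l.get j) (l.get i)

def GoodOrder {V : Type*} [Fintype V] (G : SimpleGraph V) (l : List V) : Prop :=
  ∀ v : V, greedy G l v ≤ chi G

def Good {V : Type*} [Fintype V] (G : SimpleGraph V) : Prop :=
  ∀ s : Finset V, (G.induce (↑s : Set V)).Connected →
    ∀ l : List ↥(↑s : Set V), IsConnOrder (G.induce (↑s : Set V)) l →
      GoodOrder (G.induce (↑s : Set V)) l

def BadOrder {V : Type*} [Fintype V] (G : SimpleGraph V) (l : List V) : Prop :=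
  IsConnOrder G l ∧ ¬ GoodOrder G l

def MinimallyBad {V : Type*} [Fintype V] (G : SimpleGraph V) : Prop :=
  ¬ Good G ∧ ∀ s : Finset V, s ≠ Finset.univ →
    (G.induce (↑s : Set V)).Connected → Good (G.induce (↑s : Set V))

def IsInducedPath {V : Type*} (G : SimpleGraph V) (P : List V) : Prop :=
  P.Nodup ∧ ∀ i j : Fin P.length,
    G.Adj (P.get i) (P.get j) ↔ (i.1 + 1 = j.1 ∨ j.1 + 1 = i.1)

def IsFlatPath {V : Type*} (G : SimpleGraph V) (P : List V) : Prop :=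
  IsInducedPath G P ∧
    ∀ i : Fin P.length, 0 < i.1 → i.1 + 1 < P.length → (G.neighborSet (P.get i)).ncard = 2

def WellOrderedPath {V : Type*} (l P : List V) : Prop :=
  P.Pairwise (fun u v => idx l u < idx l v) ∨ P.Pairwise (fun u v => idx l v < idx l u)

def IsMaxFlatPath {V : Type*} (G : SimpleGraph V) (P : List V) : Prop :=
  IsFlatPath G P ∧ ∀ h : P ≠ [],
    (G.neighborSet (P.head h)).ncard ≠ 2 ∧ (G.neighborSet (P.getLast h)).ncard ≠ 2

def ClawFree {V : Type*} (G : SimpleGraph V) : Prop :=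
  ∀ a b c d : V, G.Adj a b → G.Adj a c → G.Adj a d → b ≠ c → b ≠ d → c ≠ d →
    G.Adj b c ∨ G.Adj b d ∨ G.Adj c d

def IsHole {V : Type*} (G : SimpleGraph V) (C : List V) : Prop :=
  4 ≤ C.length ∧ C.Nodup ∧
    ∀ i j : Fin C.length, G.Adj (C.get i) (C.get j) ↔
      ((i.1 + 1) % C.length = j.1 ∨ (j.1 + 1) % C.length = i.1)

def GemFree {V : Type*} (G : SimpleGraph V) : Prop :=
  ¬ ∃ a b c d e : V, G.Adj a b ∧ G.Adj b c ∧ G.Adj c d ∧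
    ¬ G.Adj a c ∧ ¬ G.Adj a d ∧ ¬ G.Adj b d ∧
    G.Adj e a ∧ G.Adj e b ∧ G.Adj e c ∧ G.Adj e d


/- ===================== Auxiliary development ===================== -/

section Aux

open Classical

variable {V : Type*} {G : SimpleGraph V}

theorem greedyFrom_of_not_mem (G : SimpleGraph V) (f : V → ℕ) {m : List V} {v : V}
    (hv : v ∉ m) : greedyFrom G f m v = f v := by
  induction m generalizing f with
  | nil => rfl
  | cons a t ih =>
    have hva : v ≠ a := by rintro rfl; exact hv (List.mem_cons_self)
    have hvt : v ∉ t := fun h => hv (List.mem_cons_of_mem _ h)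
    show greedyFrom G (greedyStep G f a) t v = f v
    rw [ih _ hvt]
    simp [greedyStep, hva]

theorem greedy_of_not_mem {l : List V} {v : V} (hv : v ∉ l) : greedy G l v = 0 :=
  greedyFrom_of_not_mem G _ hv

open Classical in
theorem idx_lt_length {l : List V} {v : V} (h : v ∈ l) : idx l v < l.length :=
  List.idxOf_lt_length_iff.2 h

open Classical in
theorem mem_of_idx_lt {l : List V} {v : V} (h : idx l v < l.length) : v ∈ l := by
  by_contra hv
  rw [idx, List.idxOf_eq_length hv] at h
  exact lt_irrefl _ h

open Classical in
theorem idx_get {l : List V} (h : l.Nodup) (i : Fin l.length) : idx l (l.get i) = i :=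
  List.get_idxOf h i

open Classical in
theorem get_idx {l : List V} {v : V} (h : v ∈ l) :
    l.get ⟨idx l v, idx_lt_length h⟩ = v := List.idxOf_get _

theorem idx_inj {l : List V} {u v : V} (hu : u ∈ l) (hv : v ∈ l)
    (h : idx l u = idx l v) : u = v := by
  have h1 := get_idx hu
  have h2 := get_idx hv
  rw [← h1, ← h2]
  congr 1
  exact Fin.ext h

open Classical in
theorem idx_append_left {m m' : List V} {w : V} (hw : w ∈ m) :
    idx (m ++ m') w = idx m w := by
  induction m with
  | nil => simp at hw
  | cons a t ih =>
    rcases List.mem_cons.1 hw with rfl | hwt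
    · simp [idx, List.idxOf_cons_self]
    · by_cases hwa : w = a
      · subst hwa; simp [idx, List.idxOf_cons_self]
      · show idx (a :: (t ++ m')) w = idx (a :: t) w
        rw [idx, idx, List.idxOf_cons_ne _ (fun h => hwa h.symm),
          List.idxOf_cons_ne _ (fun h => hwa h.symm)]
        have := ih hwt
        rw [idx, idx] at this
        simp [this]

open Classical in
theorem idx_append_not_mem {m m' : List V} {w : V} (hw : w ∉ m) :
    idx (m ++ m') w = m.length + idx m' w :=
  List.idxOf_append_of_notMem hw

open Classical in
theorem mem_prefix_iff_idx_lt {m m' : List V} {v w : V} (hv : v ∉ m) :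
    w ∈ m ↔ idx (m ++ v :: m') w < idx (m ++ v :: m') v := by
  have hidxv : idx (m ++ v :: m') v = m.length := by
    rw [idx_append_not_mem hv, idx, List.idxOf_cons_self]
    omega
  constructor
  · intro hw
    rw [hidxv, idx_append_left hw]
    exact idx_lt_length hw
  · intro h
    by_contra hw
    rw [hidxv, idx_append_not_mem hw] at h
    omega

/- ---------- Locality of the greedy colouring ---------- -/

noncomputable def pal (G : SimpleGraph V) (l : List V) (v : V) : Set ℕ :=
  {c : ℕ | 1 ≤ c ∧ ∀ w, G.Adj v w → idx l w < idx l v → greedy G l w ≠ c}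

open Classical in
theorem greedy_eq_sInf_pal {l : List V} {v : V} (hnd : l.Nodup) (hv : v ∈ l) :
    greedy G l v = sInf (pal G l v) := by
  obtain ⟨m, m', rfl⟩ := List.append_of_mem hv
  have hvm : v ∉ m := by
    intro h
    have := List.disjoint_of_nodup_append hnd
    exact this h (List.mem_cons_self)
  have hvm' : v ∉ m' := by
    have := (List.nodup_append.1 hnd).2.1
    exact (List.nodup_cons.1 this).1
  -- value of v
  have hval : greedy G (m ++ v :: m') v
      = sInf {c : ℕ | 1 ≤ c ∧ ∀ w, G.Adj v w → greedyFrom G (fun _ => 0) m w ≠ c} := by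
    show greedyFrom G (fun _ => 0) (m ++ v :: m') v = _
    rw [greedyFrom, List.foldl_append]
    show greedyFrom G (greedyStep G (greedyFrom G (fun _ => 0) m) v) m' v = _
    rw [greedyFrom_of_not_mem G _ hvm']
    simp [greedyStep]
  rw [hval]
  congr 1
  ext c
  simp only [Set.mem_setOf_eq, pal]
  constructor
  · rintro ⟨h1, h2⟩
    refine ⟨h1, fun w hadj hidx => ?_⟩
    have hwm : w ∈ m := (mem_prefix_iff_idx_lt hvm).2 hidx
    have hwv : w ≠ v := fun h => hvm (h ▸ hwm)
    have hwm' : w ∉ m' := by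
      intro h
      have := List.disjoint_of_nodup_append hnd
      exact this hwm (List.mem_cons_of_mem _ h)
    have : greedy G (m ++ v :: m') w = greedyFrom G (fun _ => 0) m w := by
      show greedyFrom G (fun _ => 0) (m ++ v :: m') w = _
      rw [greedyFrom, List.foldl_append]
      show greedyFrom G (greedyStep G (greedyFrom G (fun _ => 0) m) v) m' w = _
      rw [greedyFrom_of_not_mem G _ hwm']
      simp [greedyStep, hwv]
    rw [this]
    exact h2 w hadj
  · rintro ⟨h1, h2⟩
    refine ⟨h1, fun w hadj => ?_⟩
    by_cases hwm : w ∈ m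
    · have hwv : w ≠ v := fun h => hvm (h ▸ hwm)
      have hwm' : w ∉ m' := by
        intro h
        have := List.disjoint_of_nodup_append hnd
        exact this hwm (List.mem_cons_of_mem _ h)
      have heq : greedy G (m ++ v :: m') w = greedyFrom G (fun _ => 0) m w := by
        show greedyFrom G (fun _ => 0) (m ++ v :: m') w = _
        rw [greedyFrom, List.foldl_append]
        show greedyFrom G (greedyStep G (greedyFrom G (fun _ => 0) m) v) m' w = _
        rw [greedyFrom_of_not_mem G _ hwm']
        simp [greedyStep, hwv]
      rw [← heq]
      exact h2 w hadj ((mem_prefix_iff_idx_lt hvm).1 hwm)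
    · rw [greedyFrom_of_not_mem G _ hwm]
      omega

theorem pal_nonempty [Fintype V] (l : List V) (v : V) : (pal G l v).Nonempty := by
  refine ⟨(Finset.univ.sup (greedy G l)) + 1, by omega, fun w _ _ => ?_⟩
  have : greedy G l w ≤ Finset.univ.sup (greedy G l) :=
    Finset.le_sup (Finset.mem_univ w)
  omega

theorem greedy_mem_pal [Fintype V] {l : List V} {v : V} (hnd : l.Nodup) (hv : v ∈ l) :
    greedy G l v ∈ pal G l v := by
  rw [greedy_eq_sInf_pal hnd hv]
  exact Nat.sInf_mem (pal_nonempty l v)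

theorem one_le_greedy [Fintype V] {l : List V} {v : V} (hnd : l.Nodup) (hv : v ∈ l) :
    1 ≤ greedy G l v := (greedy_mem_pal hnd hv).1

theorem greedy_proper [Fintype V] {l : List V} {u v : V} (hnd : l.Nodup)
    (hu : u ∈ l) (hv : v ∈ l) (hadj : G.Adj u v) : greedy G l u ≠ greedy G l v := by
  have hne : u ≠ v := hadj.ne
  have hidx : idx l u ≠ idx l v := fun h => hne (idx_inj hu hv h)
  rcases Nat.lt_or_ge (idx l u) (idx l v) with h | h
  · intro hcol
    exact (greedy_mem_pal hnd hv).2 u hadj.symm h hcol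
  · have h' : idx l v < idx l u := lt_of_le_of_ne h (Ne.symm hidx)
    intro hcol
    exact (greedy_mem_pal hnd hu).2 v hadj h' hcol.symm

theorem exists_earlier_nbr_of_lt [Fintype V] {l : List V} {v : V} (hnd : l.Nodup)
    (hv : v ∈ l) {m : ℕ} (h1 : 1 ≤ m) (hlt : m < greedy G l v) :
    ∃ w, G.Adj v w ∧ idx l w < idx l v ∧ greedy G l w = m := by
  have : m ∉ pal G l v := by
    rw [greedy_eq_sInf_pal hnd hv] at hlt
    exact Nat.notMem_of_lt_sInf hlt
  simp only [pal, Set.mem_setOf_eq, not_and, not_forall] at this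
  obtain ⟨w, hadj, hidx, hcol⟩ := this h1
  exact ⟨w, hadj, hidx, by omega⟩

theorem nat_sInf_eq {S : Set ℕ} {k : ℕ} (hk : k ∈ S) (hlt : ∀ m < k, m ∉ S) :
    sInf S = k := by
  refine le_antisymm (Nat.sInf_le hk) (le_of_not_gt fun h => ?_)
  exact hlt _ h (Nat.sInf_mem ⟨k, hk⟩)

/- ---------- small idx helpers ---------- -/

open Classical in
theorem idx_cons_self (a : V) (t : List V) : idx (a :: t) a = 0 := by
  rw [idx, List.idxOf_cons_self]

open Classical in
theorem idx_cons_ne {a b : V} (t : List V) (h : b ≠ a) :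
    idx (a :: t) b = idx t b + 1 := by
  rw [idx, List.idxOf_cons_ne _ (fun hh => h hh.symm), idx]

theorem idx_zero_eq {l : List V} {v : V} (hv : v ∈ l) (h0 : idx l v = 0) :
    ∀ h : 0 < l.length, l.get ⟨0, h⟩ = v := by
  intro h
  have := get_idx hv
  have hfin : (⟨idx l v, idx_lt_length hv⟩ : Fin l.length) = ⟨0, h⟩ := Fin.ext h0
  rwa [hfin] at this

/- ---------- Connected orders: index form ---------- -/

theorem connOrder_exists_earlier {l : List V} (hco : IsConnOrder G l) {v : V}
    (hv : v ∈ l) (h0 : idx l v ≠ 0) :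
    ∃ w, G.Adj w v ∧ idx l w < idx l v := by
  have hnd := hco.1
  have hlt := idx_lt_length hv
  obtain ⟨j, hj, hadj⟩ := hco.2.2 ⟨idx l v, hlt⟩ (Nat.pos_of_ne_zero h0)
  refine ⟨l.get j, ?_, ?_⟩
  · rwa [get_idx hv] at hadj
  · rw [idx_get hnd j]; exact hj

theorem isConnOrder_of_idx {l : List V} (hnd : l.Nodup) (hcompl : ∀ v : V, v ∈ l)
    (h : ∀ v ∈ l, idx l v ≠ 0 → ∃ w, G.Adj w v ∧ idx l w < idx l v) :
    IsConnOrder G l := by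
  refine ⟨hnd, hcompl, fun i hi => ?_⟩
  have hvi : idx l (l.get i) = i := idx_get hnd i
  obtain ⟨w, hadj, hlt⟩ := h (l.get i) (List.get_mem _ _) (by omega)
  have hwl : w ∈ l := mem_of_idx_lt (lt_trans (by omega) i.isLt)
  refine ⟨⟨idx l w, idx_lt_length hwl⟩, by rw [← hvi]; exact hlt, ?_⟩
  rwa [get_idx hwl]

theorem connected_of_connOrder {l : List V} (hco : IsConnOrder G l) (hne : l ≠ []) :
    G.Connected := by
  have hnd := hco.1
  have hcompl := hco.2.1
  have hlen : 0 < l.length := List.length_pos_iff.2 hne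
  have hreach : ∀ n, ∀ v ∈ l, idx l v = n → G.Reachable (l.get ⟨0, hlen⟩) v := by
    intro n
    induction n using Nat.strong_induction_on with
    | _ n ih =>
      intro v hv hn
      rcases Nat.eq_zero_or_pos n with rfl | hpos
      · rw [idx_zero_eq hv hn hlen]
      · obtain ⟨w, hadj, hlt⟩ := connOrder_exists_earlier hco hv (by omega)
        have hwl : w ∈ l := mem_of_idx_lt (lt_trans (hn ▸ hlt) (idx_lt_length hv))
        exact (ih _ (hn ▸ hlt) w hwl rfl).trans hadj.reachable
  rw [SimpleGraph.connected_iff]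
  exact ⟨fun u v => ((hreach _ u (hcompl u) rfl).symm).trans (hreach _ v (hcompl v) rfl),
    ⟨l.get ⟨0, hlen⟩⟩⟩

/- ---------- Determination of greedy by palettes ---------- -/

theorem greedy_eq_of_palette {W : Type*} (H : SimpleGraph W) (m : List W)
    (hnd : m.Nodup) (f : W → ℕ)
    (hpal : ∀ v ∈ m,
      sInf {c : ℕ | 1 ≤ c ∧ ∀ w, H.Adj v w → idx m w < idx m v → f w ≠ c} = f v) :
    ∀ v ∈ m, greedy H m v = f v := by
  have main : ∀ n, ∀ v ∈ m, idx m v = n → greedy H m v = f v := by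
    intro n
    induction n using Nat.strong_induction_on with
    | _ n ih =>
      intro v hv hn
      rw [greedy_eq_sInf_pal hnd hv, ← hpal v hv]
      congr 1
      ext c
      simp only [pal, Set.mem_setOf_eq]
      constructor
      · rintro ⟨h1, h2⟩
        refine ⟨h1, fun w hadj hidx => ?_⟩
        have hwm : w ∈ m := mem_of_idx_lt (lt_trans hidx (idx_lt_length hv))
        rw [← ih _ (hn ▸ hidx) w hwm rfl]
        exact h2 w hadj hidx
      · rintro ⟨h1, h2⟩
        refine ⟨h1, fun w hadj hidx => ?_⟩
        have hwm : w ∈ m := mem_of_idx_lt (lt_trans hidx (idx_lt_length hv))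
        rw [ih _ (hn ▸ hidx) w hwm rfl]
        exact h2 w hadj hidx
  exact fun v hv => main _ v hv rfl

/- ---------- idx and filter / erase ---------- -/

theorem idx_filter_lt_iff {p : V → Bool} {l : List V} (hnd : l.Nodup) {a b : V}
    (ha : a ∈ l.filter p) (hb : b ∈ l.filter p) :
    idx (l.filter p) a < idx (l.filter p) b ↔ idx l a < idx l b := by
  induction l with
  | nil => simp at ha
  | cons h t ih =>
    have hnd' : t.Nodup := (List.nodup_cons.1 hnd).2
    have hht : h ∉ t := (List.nodup_cons.1 hnd).1
    by_cases hp : p h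
    · rw [List.filter_cons_of_pos hp] at ha hb ⊢
      by_cases hah : a = h
      · subst hah
        rw [idx_cons_self, idx_cons_self]
        by_cases hbh : b = a
        · subst hbh; rw [idx_cons_self, idx_cons_self]
        · rw [idx_cons_ne _ hbh, idx_cons_ne _ hbh]; omega
      · by_cases hbh : b = h
        · subst hbh
          rw [idx_cons_self, idx_cons_self, idx_cons_ne _ hah, idx_cons_ne _ hah]
          omega
        · have ha' : a ∈ t.filter p := by
            rcases List.mem_cons.1 ha with rfl | h' ; exact absurd rfl hah; exact h'
          have hb' : b ∈ t.filter p := by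
            rcases List.mem_cons.1 hb with rfl | h' ; exact absurd rfl hbh; exact h'
          rw [idx_cons_ne _ hah, idx_cons_ne _ hbh, idx_cons_ne _ hah, idx_cons_ne _ hbh]
          have := ih hnd' ha' hb'
          omega
    · rw [List.filter_cons_of_neg (by simpa using hp)] at ha hb ⊢
      have hat : a ∈ t := (List.mem_filter.1 ha).1
      have hbt : b ∈ t := (List.mem_filter.1 hb).1
      have hah : a ≠ h := fun hh => hht (hh ▸ hat)
      have hbh : b ≠ h := fun hh => hht (hh ▸ hbt)
      rw [idx_cons_ne _ hah, idx_cons_ne _ hbh]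
      have := ih hnd' ha hb
      omega

open Classical in
theorem idx_erase_lt_iff {l : List V} (hnd : l.Nodup) {x a b : V}
    (ha : a ∈ l.erase x) (hb : b ∈ l.erase x) :
    idx (l.erase x) a < idx (l.erase x) b ↔ idx l a < idx l b := by
  rw [List.Nodup.erase_eq_filter hnd] at ha hb ⊢
  exact idx_filter_lt_iff hnd ha hb

open Classical in
theorem idx_erase_zero {l : List V} (hnd : l.Nodup) {x v : V} (hx : idx l x ≠ 0)
    (hv : v ∈ l) (h0 : idx l v = 0) : idx (l.erase x) v = 0 := by
  cases l with
  | nil => simp at hv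
  | cons h t =>
    have hvh : v = h := by
      by_contra hne
      rw [idx_cons_ne _ hne] at h0
      omega
    subst hvh
    have hxh : x ≠ v := by
      rintro rfl; rw [idx_cons_self] at hx; omega
    rw [List.erase_cons_tail]
    · rw [idx_cons_self]
    · simp [hxh.symm]

/- ---------- chi lemmas ---------- -/

theorem chi_colorable [Fintype V] (G : SimpleGraph V) : G.Colorable (chi G) := by
  have h : Fintype.card V ∈ {n : ℕ | G.Colorable n} := by
    simp only [Set.mem_setOf_eq]; exact G.colorable_of_fintype
  have := Nat.sInf_mem ⟨_, h⟩
  simpa only [chi, Set.mem_setOf_eq] using this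

theorem chi_le [Fintype V] {n : ℕ} (h : G.Colorable n) : chi G ≤ n :=
  Nat.sInf_le h

theorem two_le_chi [Fintype V] {u v : V} (he : G.Adj u v) : 2 ≤ chi G := by
  by_contra h
  have h1 : G.Colorable 1 := (chi_colorable G).mono (by omega)
  obtain ⟨C⟩ := h1
  exact C.valid he (Subsingleton.elim _ _)

theorem chi_induce_le [Fintype V] (s : Set V) [Fintype ↥s] :
    chi (G.induce s) ≤ chi G := by
  obtain ⟨C⟩ := chi_colorable G
  refine chi_le ⟨SimpleGraph.Coloring.mk (fun u => C u.1)
    (fun {u w} h => C.valid (SimpleGraph.comap_adj.mp h))⟩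

theorem colorable_equiv {W : Type*} {H : SimpleGraph W} (e : V ≃ W)
    (hadj : ∀ a b, H.Adj (e a) (e b) ↔ G.Adj a b) (n : ℕ) :
    G.Colorable n ↔ H.Colorable n := by
  constructor
  · rintro ⟨C⟩
    refine ⟨SimpleGraph.Coloring.mk (fun w => C (e.symm w)) (fun {v w} h => ?_)⟩
    apply C.valid
    have := hadj (e.symm v) (e.symm w)
    rw [e.apply_symm_apply, e.apply_symm_apply] at this
    exact this.1 h
  · rintro ⟨C⟩
    exact ⟨SimpleGraph.Coloring.mk (fun v => C (e v))
      (fun {v w} h => C.valid ((hadj v w).2 h))⟩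

theorem chi_equiv {W : Type*} [Fintype V] [Fintype W] {H : SimpleGraph W} (e : V ≃ W)
    (hadj : ∀ a b, H.Adj (e a) (e b) ↔ G.Adj a b) : chi G = chi H := by
  have hset : {n : ℕ | G.Colorable n} = {n : ℕ | H.Colorable n} := by
    ext n; exact colorable_equiv e hadj n
  unfold chi
  rw [hset]

/- ---------- transfer of greedy along an isomorphism ---------- -/

theorem greedyStep_map {W : Type*} {H : SimpleGraph W} (e : V ≃ W)
    (hadj : ∀ a b, H.Adj (e a) (e b) ↔ G.Adj a b) (f : V → ℕ) (g : W → ℕ)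
    (hfg : ∀ u, g (e u) = f u) (a u : V) :
    greedyStep H g (e a) (e u) = greedyStep G f a u := by
  by_cases hua : u = a
  · subst hua
    simp only [greedyStep, if_pos rfl]
    have hset : {c : ℕ | 1 ≤ c ∧ ∀ w, H.Adj (e u) w → g w ≠ c}
        = {c : ℕ | 1 ≤ c ∧ ∀ w, G.Adj u w → f w ≠ c} := by
      ext c
      simp only [Set.mem_setOf_eq]
      constructor
      · rintro ⟨h1, h2⟩
        refine ⟨h1, fun w hw => ?_⟩
        have := h2 (e w) ((hadj u w).2 hw)
        rwa [hfg w] at this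
      · rintro ⟨h1, h2⟩
        refine ⟨h1, fun w hw => ?_⟩
        obtain ⟨w', rfl⟩ := e.surjective w
        rw [hfg w']
        exact h2 w' ((hadj u w').1 hw)
    rw [hset]
    simp
  · have : e u ≠ e a := fun h => hua (e.injective h)
    simp only [greedyStep, if_neg hua, if_neg this]
    exact hfg u

theorem greedyFrom_map {W : Type*} {H : SimpleGraph W} (e : V ≃ W)
    (hadj : ∀ a b, H.Adj (e a) (e b) ↔ G.Adj a b) (l : List V) :
    ∀ (f : V → ℕ) (g : W → ℕ), (∀ u, g (e u) = f u) →
    ∀ u, greedyFrom H g (l.map e) (e u) = greedyFrom G f l u := by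
  induction l with
  | nil => intro f g hfg u; exact hfg u
  | cons a t ih =>
    intro f g hfg u
    show greedyFrom H (greedyStep H g (e a)) (t.map e) (e u) = greedyFrom G (greedyStep G f a) t u
    exact ih _ _ (fun u' => greedyStep_map e hadj f g hfg a u') u

theorem greedy_map {W : Type*} {H : SimpleGraph W} (e : V ≃ W)
    (hadj : ∀ a b, H.Adj (e a) (e b) ↔ G.Adj a b) (l : List V) (u : V) :
    greedy H (l.map e) (e u) = greedy G l u :=
  greedyFrom_map e hadj l _ _ (fun _ => rfl) u

open Classical in
theorem idx_map {W : Type*} (e : V ≃ W) (l : List V) (v : V) :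
    idx (l.map e) (e v) = idx l v := by
  induction l with
  | nil => rfl
  | cons a t ih =>
    by_cases hva : v = a
    · subst hva
      rw [List.map_cons, idx_cons_self, idx_cons_self]
    · have : e v ≠ e a := fun h => hva (e.injective h)
      rw [List.map_cons, idx_cons_ne _ this, idx_cons_ne _ hva, ih]

theorem connOrder_map {W : Type*} {H : SimpleGraph W} (e : V ≃ W)
    (hadj : ∀ a b, H.Adj (e a) (e b) ↔ G.Adj a b) {l : List V}
    (hco : IsConnOrder G l) : IsConnOrder H (l.map e) := by
  refine isConnOrder_of_idx (hco.1.map e.injective) (fun w => ?_) (fun w hw h0 => ?_)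
  · obtain ⟨w', rfl⟩ := e.surjective w
    exact List.mem_map_of_mem (f := e) (hco.2.1 w')
  · obtain ⟨w', rfl⟩ := e.surjective w
    rw [idx_map] at h0
    obtain ⟨u, hu, hlt⟩ := connOrder_exists_earlier hco (hco.2.1 w') h0
    refine ⟨e u, ?_, ?_⟩
    · exact (hadj u w').2 hu
    · rw [idx_map, idx_map]; exact hlt

/- ---------- applying goodness ---------- -/

theorem goodorder_of_good {U : Type*} [Fintype U] {F : SimpleGraph U} (hg : Good F)
    {l' : List U} (hco : IsConnOrder F l') (hne : l' ≠ []) :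
    ∀ v, greedy F l' v ≤ chi F := by
  intro v
  set T : Finset U := Finset.univ with hT
  have hmem : ∀ u : U, u ∈ (↑T : Set U) := by simp [hT]
  let e : U ≃ ↥(↑T : Set U) :=
    ⟨fun u => ⟨u, hmem u⟩, fun u => u.1, fun u => rfl, fun u => Subtype.ext rfl⟩
  have hadj : ∀ a b : U, (F.induce (↑T : Set U)).Adj (e a) (e b) ↔ F.Adj a b :=
    fun a b => SimpleGraph.comap_adj
  have hco' : IsConnOrder (F.induce (↑T : Set U)) (l'.map e) := connOrder_map e hadj hco
  have hconn : (F.induce (↑T : Set U)).Connected :=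
    connected_of_connOrder hco' (by simpa using hne)
  have hgood := hg T hconn (l'.map e) hco'
  have := hgood (e v)
  rw [greedy_map e hadj] at this
  calc greedy F l' v ≤ chi (F.induce (↑T : Set U)) := this
    _ = chi F := (chi_equiv e hadj).symm

/- ---------- pmap and idx ---------- -/

open Classical in
theorem idx_pmap {p : V → Prop} {l : List V} (H : ∀ a ∈ l, p a) {v : V} (hv : p v) :
    idx (l.pmap (fun a h => (⟨a, h⟩ : Subtype p)) H) ⟨v, hv⟩ = idx l v := by
  induction l with
  | nil => rfl
  | cons a t ih =>
    simp only [List.pmap]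
    by_cases hva : v = a
    · subst hva
      have : (⟨v, hv⟩ : Subtype p) = ⟨v, H v (List.mem_cons_self)⟩ := rfl
      rw [this, idx_cons_self, idx_cons_self]
    · have hne : (⟨v, hv⟩ : Subtype p) ≠ ⟨a, H a (List.mem_cons_self)⟩ :=
        fun h => hva (congrArg Subtype.val h)
      rw [idx_cons_ne _ hne, idx_cons_ne _ hva, ih (fun x hx => H x (List.mem_cons_of_mem _ hx))]

/- ---------- bipartite graphs: connected greedy uses at most 2 colours ---------- -/

theorem greedy_le_two_of_colorable [Fintype V] {l : List V} (hco : IsConnOrder G l)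
    (h2 : G.Colorable 2) : ∀ v ∈ l, greedy G l v ≤ 2 := by
  obtain ⟨C⟩ := h2
  intro v hv
  have hlen : 0 < l.length := List.length_pos_iff.2 (List.ne_nil_of_mem hv)
  set h₀ : V := l.get ⟨0, hlen⟩ with hh₀
  have hfin2 : ∀ a b c : Fin 2, a ≠ b → ((a = c) ↔ ¬(b = c)) := by decide
  have claim : ∀ n, ∀ v ∈ l, idx l v = n →
      greedy G l v = (if C v = C h₀ then 1 else 2) := by
    intro n
    induction n using Nat.strong_induction_on with
    | _ n ih =>
      intro v hv hn
      rw [greedy_eq_sInf_pal hco.1 hv]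
      rcases Nat.eq_zero_or_pos n with rfl | hpos
      · have hveq : v = h₀ := (idx_zero_eq hv hn hlen).symm
        subst hveq
        rw [if_pos rfl]
        refine nat_sInf_eq ⟨le_refl 1, fun w _ hidx => by omega⟩ ?_
        rintro m hm ⟨h1, -⟩
        omega
      · obtain ⟨w₁, hadj₁, hlt₁⟩ := connOrder_exists_earlier hco hv (by omega)
        have hwcol : ∀ w, G.Adj v w → idx l w < idx l v →
            greedy G l w = (if C v = C h₀ then 2 else 1) := by
          intro w hadj hidx
          have hwl : w ∈ l := mem_of_idx_lt (lt_trans hidx (idx_lt_length hv))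
          have := ih _ (hn ▸ hidx) w hwl rfl
          rw [this]
          have hCne : C w ≠ C v := C.valid hadj.symm
          have := hfin2 _ _ (C h₀) hCne
          by_cases hcv : C v = C h₀
          · rw [if_pos hcv, if_neg (by rw [this]; simpa using hcv)]
          · rw [if_neg hcv, if_pos (by rw [this]; simpa using hcv)]
        by_cases hcv : C v = C h₀
        · rw [if_pos hcv]
          refine nat_sInf_eq ⟨le_refl 1, fun w hadj hidx => ?_⟩ ?_
          · rw [hwcol w hadj hidx, if_pos hcv]; omega
          · rintro m hm ⟨h1, -⟩; omega
        · rw [if_neg hcv]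
          refine nat_sInf_eq ⟨by omega, fun w hadj hidx => ?_⟩ ?_
          · rw [hwcol w hadj hidx, if_neg hcv]; omega
          · rintro m hm ⟨h1, hall⟩
            have := hall w₁ hadj₁.symm hlt₁
            rw [hwcol w₁ hadj₁.symm hlt₁, if_neg hcv] at this
            omega
  have := claim _ v hv rfl
  rw [this]
  split <;> omega

theorem three_le_chi [Fintype V] {l : List V} (hbad : BadOrder G l) {u v : V}
    (he : G.Adj u v) : 3 ≤ chi G := by
  by_contra h
  have h2le : 2 ≤ chi G := two_le_chi he
  have h2 : G.Colorable 2 := (chi_colorable G).mono (by omega)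
  have hle := greedy_le_two_of_colorable hbad.1 h2
  exact hbad.2 (fun x => le_trans (hle x (hbad.1.2.1 x)) (by omega))

/- ---------- the deletion lemma ---------- -/

open Classical in
theorem deletion_contra [Fintype V] {G : SimpleGraph V} {l : List V}
    (hmin : MinimallyBad G) (hbad : BadOrder G l) (x : V) (l₂ : List V)
    (hnd₂ : l₂.Nodup) (hmem₂ : ∀ v : V, v ∈ l₂ ↔ v ≠ x)
    (hconn₂ : ∀ v, v ≠ x → idx l₂ v ≠ 0 →
      ∃ w, w ≠ x ∧ G.Adj w v ∧ idx l₂ w < idx l₂ v)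
    (hpal : ∀ v, v ≠ x →
      sInf {c : ℕ | 1 ≤ c ∧ ∀ w, G.Adj v w → w ≠ x → idx l₂ w < idx l₂ v →
        greedy G l w ≠ c} = greedy G l v)
    (hx : greedy G l x ≤ chi G) : False := by
  -- bad witness
  have hngo := hbad.2
  rw [GoodOrder] at hngo
  push_neg at hngo
  obtain ⟨w₀, hw₀⟩ := hngo
  have hw₀x : w₀ ≠ x := by rintro rfl; omega
  -- the subgraph
  set t : Finset V := Finset.univ.erase x with ht
  have hmemt : ∀ v : V, v ∈ (↑t : Set V) ↔ v ≠ x := by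
    intro v; simp [ht]
  have hmeml₂ : ∀ a ∈ l₂, a ∈ (↑t : Set V) := fun a ha => (hmemt a).2 ((hmem₂ a).1 ha)
  set F : SimpleGraph ↥(↑t : Set V) := G.induce (↑t : Set V) with hF
  let l₂' : List ↥(↑t : Set V) := l₂.pmap (fun a h => (⟨a, h⟩ : ↥(↑t : Set V))) hmeml₂
  have hidx' : ∀ (v : V) (hv : v ∈ (↑t : Set V)),
      idx l₂' (⟨v, hv⟩ : ↥(↑t : Set V)) = idx l₂ v := by
    intro v hv
    exact idx_pmap hmeml₂ hv
  have hnd' : l₂'.Nodup :=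
    List.Nodup.pmap (fun a ha b hb h => congrArg Subtype.val h) hnd₂
  have hcompl' : ∀ u : ↥(↑t : Set V), u ∈ l₂' := by
    intro u
    rw [List.mem_pmap]
    exact ⟨u.1, (hmem₂ _).2 ((hmemt u.1).1 u.2), rfl⟩
  have hadjF : ∀ u w : ↥(↑t : Set V), F.Adj u w ↔ G.Adj u.1 w.1 := by
    intro u w; rw [hF]; exact SimpleGraph.comap_adj
  have hidxu : ∀ u : ↥(↑t : Set V), idx l₂' u = idx l₂ u.1 := by
    intro u
    have : u = ⟨u.1, u.2⟩ := rfl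
    rw [this, hidx']
  -- connected order on the subgraph
  have hco' : IsConnOrder F l₂' := by
    refine isConnOrder_of_idx hnd' hcompl' (fun u hu h0 => ?_)
    have hux : u.1 ≠ x := (hmemt u.1).1 u.2
    rw [hidxu] at h0
    obtain ⟨w, hwx, hadj, hlt⟩ := hconn₂ u.1 hux h0
    refine ⟨⟨w, (hmemt w).2 hwx⟩, (hadjF _ _).2 hadj, ?_⟩
    rw [hidxu, hidx']
    exact hlt
  -- greedy on the subgraph agrees with greedy on G
  have hgr : ∀ u : ↥(↑t : Set V), u ∈ l₂' → greedy F l₂' u = greedy G l u.1 := by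
    refine greedy_eq_of_palette F l₂' hnd' (fun u => greedy G l u.1) (fun v _ => ?_)
    have hvx : v.1 ≠ x := (hmemt v.1).1 v.2
    have hset : {c : ℕ | 1 ≤ c ∧ ∀ w : ↥(↑t : Set V), F.Adj v w →
          idx l₂' w < idx l₂' v → greedy G l w.1 ≠ c}
        = {c : ℕ | 1 ≤ c ∧ ∀ w, G.Adj v.1 w → w ≠ x → idx l₂ w < idx l₂ v.1 →
          greedy G l w ≠ c} := by
      ext c
      simp only [Set.mem_setOf_eq]
      constructor
      · rintro ⟨h1, h2⟩
        refine ⟨h1, fun w hadj hwx hlt => ?_⟩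
        have := h2 ⟨w, (hmemt w).2 hwx⟩ ((hadjF _ _).2 hadj)
        rw [hidx', hidxu] at this
        exact this hlt
      · rintro ⟨h1, h2⟩
        refine ⟨h1, fun w hadj hlt => ?_⟩
        rw [hidxu, hidxu] at hlt
        exact h2 w.1 ((hadjF _ _).1 hadj) ((hmemt w.1).1 w.2) hlt
    rw [hset]
    exact hpal v.1 hvx
  -- the subgraph is a proper connected induced subgraph
  have hw₀l₂ : w₀ ∈ l₂ := (hmem₂ w₀).2 hw₀x
  have hne' : l₂' ≠ [] := by
    intro h
    have : l₂'.length = 0 := by rw [h]; rfl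
    rw [List.length_pmap] at this
    rw [List.length_eq_zero_iff.1 this] at hw₀l₂
    simp at hw₀l₂
  have hconn : F.Connected := connected_of_connOrder hco' hne'
  have htne : t ≠ Finset.univ := by
    intro h
    have hxt : x ∉ t := by simp [ht]
    rw [h] at hxt
    exact hxt (Finset.mem_univ x)
  have hgood : Good F := hmin.2 t htne hconn
  -- contradiction
  have hle := goodorder_of_good hgood hco' hne' ⟨w₀, (hmemt w₀).2 hw₀x⟩
  rw [hgr _ (hcompl' _)] at hle
  have hchile : chi F ≤ chi G := chi_induce_le (↑t : Set V)
  have hle' : greedy G l w₀ ≤ chi F := hle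
  omega

/- ---------- deleting a non-initial vertex whose later neighbours are compensated ---------- -/

open Classical in
theorem erase_del [Fintype V] {G : SimpleGraph V} {l : List V}
    (hmin : MinimallyBad G) (hbad : BadOrder G l) (x : V)
    (hx0 : idx l x ≠ 0)
    (hcomp : ∀ v, G.Adj x v → idx l x < idx l v →
      ∃ w, w ≠ x ∧ G.Adj w v ∧ idx l w < idx l v ∧ greedy G l w = greedy G l x)
    (hx : greedy G l x ≤ chi G) : False := by
  have hnd := hbad.1.1
  have hcompl := hbad.1.2.1
  have hxl : x ∈ l := hcompl x
  refine deletion_contra hmin hbad x (l.erase x) (hnd.erase x) ?_ ?_ ?_ hx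
  · intro v
    rw [List.Nodup.mem_erase_iff hnd]
    constructor
    · exact fun h => h.1
    · exact fun h => ⟨h, hcompl v⟩
  · -- connectivity
    intro v hvx h0
    have hvl : v ∈ l := hcompl v
    have hve : v ∈ l.erase x := (List.Nodup.mem_erase_iff hnd).2 ⟨hvx, hvl⟩
    have h0l : idx l v ≠ 0 := fun h => h0 (idx_erase_zero hnd hx0 hvl h)
    obtain ⟨w, hadj, hlt⟩ := connOrder_exists_earlier hbad.1 hvl h0l
    by_cases hwx : w = x
    · rw [hwx] at hadj hlt
      obtain ⟨w', hw'x, hw'adj, hw'lt, -⟩ := hcomp v hadj hlt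
      have hw'l : w' ∈ l := mem_of_idx_lt (lt_trans hw'lt (idx_lt_length hvl))
      have hw'e : w' ∈ l.erase x := (List.Nodup.mem_erase_iff hnd).2 ⟨hw'x, hw'l⟩
      exact ⟨w', hw'x, hw'adj, (idx_erase_lt_iff hnd hw'e hve).2 hw'lt⟩
    · have hwl : w ∈ l := mem_of_idx_lt (lt_trans hlt (idx_lt_length hvl))
      have hwe : w ∈ l.erase x := (List.Nodup.mem_erase_iff hnd).2 ⟨hwx, hwl⟩
      exact ⟨w, hwx, hadj, (idx_erase_lt_iff hnd hwe hve).2 hlt⟩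
  · -- palettes
    intro v hvx
    have hvl : v ∈ l := hcompl v
    have hve : v ∈ l.erase x := (List.Nodup.mem_erase_iff hnd).2 ⟨hvx, hvl⟩
    rw [greedy_eq_sInf_pal hnd hvl]
    congr 1
    ext c
    simp only [Set.mem_setOf_eq, pal]
    constructor
    · rintro ⟨h1, h2⟩
      refine ⟨h1, fun w hadj hlt => ?_⟩
      by_cases hwx : w = x
      · rw [hwx] at hadj hlt ⊢
        obtain ⟨w', hw'x, hw'adj, hw'lt, hw'col⟩ := hcomp v hadj.symm hlt
        have hw'l : w' ∈ l := mem_of_idx_lt (lt_trans hw'lt (idx_lt_length hvl))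
        have hw'e : w' ∈ l.erase x := (List.Nodup.mem_erase_iff hnd).2 ⟨hw'x, hw'l⟩
        have := h2 w' hw'adj.symm hw'x ((idx_erase_lt_iff hnd hw'e hve).2 hw'lt)
        rw [hw'col] at this
        exact this
      · have hwl : w ∈ l := mem_of_idx_lt (lt_trans hlt (idx_lt_length hvl))
        have hwe : w ∈ l.erase x := (List.Nodup.mem_erase_iff hnd).2 ⟨hwx, hwl⟩
        exact h2 w hadj hwx ((idx_erase_lt_iff hnd hwe hve).2 hlt)
    · rintro ⟨h1, h2⟩
      refine ⟨h1, fun w hadj hwx hlt => ?_⟩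
      have hwl : w ∈ l := hcompl w
      have hwe : w ∈ l.erase x := (List.Nodup.mem_erase_iff hnd).2 ⟨hwx, hwl⟩
      exact h2 w hadj ((idx_erase_lt_iff hnd hwe hve).1 hlt)

/- ---------- deleting the first vertex of the order ---------- -/

open Classical in
theorem first_del [Fintype V] {G : SimpleGraph V} {l : List V}
    (hmin : MinimallyBad G) (hbad : BadOrder G l) {x b v₃ : V} {tl₃ : List V}
    (hl : l = x :: b :: v₃ :: tl₃)
    (hxb : G.Adj x b) (hxv₃ : ¬ G.Adj x v₃) (hbv₃ : G.Adj b v₃)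
    (hcomp : ∀ v, G.Adj x v → v ≠ b →
      ∃ w, w ≠ x ∧ G.Adj w v ∧ idx l w < idx l v ∧ greedy G l w = greedy G l x) :
    False := by
  have hnd := hbad.1.1
  have hcompl := hbad.1.2.1
  have hxbne : x ≠ b := hxb.ne
  have hbv₃ne : b ≠ v₃ := hbv₃.ne
  have hnd' := hnd
  rw [hl] at hnd'
  simp only [List.nodup_cons, List.mem_cons] at hnd'
  push_neg at hnd'
  obtain ⟨⟨hxb', hxv₃ne, hxt⟩, ⟨hbv₃', hbt⟩, hv₃t, hndt⟩ := hnd'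
  have hlenl : l.length = tl₃.length + 3 := by rw [hl]; simp
  -- index computations in l
  have hidx_x : idx l x = 0 := by rw [hl]; exact idx_cons_self x _
  have hidx_b : idx l b = 1 := by
    rw [hl, idx_cons_ne _ hxbne.symm, idx_cons_self]
  have hidx_v₃ : idx l v₃ = 2 := by
    rw [hl, idx_cons_ne _ hxv₃ne.symm, idx_cons_ne _ hbv₃ne.symm, idx_cons_self]
  have hidx_other : ∀ w, w ≠ x → w ≠ b → w ≠ v₃ → idx l w = idx tl₃ w + 3 := by
    intro w h1 h2 h3
    rw [hl, idx_cons_ne _ h1, idx_cons_ne _ h2, idx_cons_ne _ h3]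
  have hwx_of_idx0 : ∀ w, idx l w = 0 → w = x := by
    intro w h0
    exact idx_inj (mem_of_idx_lt (by omega)) (hcompl x) (by rw [h0, hidx_x])
  have hwb_of_idx1 : ∀ w, idx l w = 1 → w = b := by
    intro w h1
    exact idx_inj (mem_of_idx_lt (by omega)) (hcompl b) (by rw [h1, hidx_b])
  -- the new list
  set l₂ : List V := v₃ :: b :: tl₃ with hl₂def
  have hidx2_v₃ : idx l₂ v₃ = 0 := idx_cons_self v₃ _
  have hidx2_b : idx l₂ b = 1 := by
    rw [hl₂def, idx_cons_ne _ hbv₃ne, idx_cons_self]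
  have hidx2_other : ∀ w, w ≠ b → w ≠ v₃ → idx l₂ w = idx tl₃ w + 2 := by
    intro w h2 h3
    rw [hl₂def, idx_cons_ne _ h3, idx_cons_ne _ h2]
  -- greedy values of the first three vertices
  have hπx : greedy G l x = 1 := by
    rw [greedy_eq_sInf_pal hnd (hcompl x)]
    refine nat_sInf_eq ⟨le_refl 1, fun w hadj hlt => ?_⟩ ?_
    · rw [hidx_x] at hlt; omega
    · rintro m hm ⟨h1, -⟩; omega
  have hπb : greedy G l b = 2 := by
    rw [greedy_eq_sInf_pal hnd (hcompl b)]
    refine nat_sInf_eq ⟨by omega, fun w hadj hlt => ?_⟩ ?_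
    · rw [hidx_b] at hlt
      rw [hwx_of_idx0 w (by omega), hπx]; omega
    · rintro m hm ⟨h1, hall⟩
      have := hall x hxb.symm (by rw [hidx_x, hidx_b]; omega)
      rw [hπx] at this
      omega
  have hπv₃ : greedy G l v₃ = 1 := by
    rw [greedy_eq_sInf_pal hnd (hcompl v₃)]
    refine nat_sInf_eq ⟨le_refl 1, fun w hadj hlt => ?_⟩ ?_
    · rw [hidx_v₃] at hlt
      have h01 : idx l w = 0 ∨ idx l w = 1 := by omega
      rcases h01 with h0 | h1
      · rw [hwx_of_idx0 w h0] at hadj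
        exact absurd hadj.symm hxv₃
      · rw [hwb_of_idx1 w h1, hπb]; omega
    · rintro m hm ⟨h1, -⟩; omega
  -- translation between the two orders, away from the first three positions
  have T1 : ∀ v, v ≠ x → v ≠ b → v ≠ v₃ → ∀ w, w ≠ x →
      (idx l₂ w < idx l₂ v ↔ idx l w < idx l v) := by
    intro v hvx hvb hvv₃ w hwx
    rw [hidx2_other v hvb hvv₃, hidx_other v hvx hvb hvv₃]
    by_cases hwb : w = b
    · rw [hwb, hidx2_b, hidx_b]; omega
    · by_cases hwv₃ : w = v₃
      · rw [hwv₃, hidx2_v₃, hidx_v₃]; omega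
      · rw [hidx2_other w hwb hwv₃, hidx_other w hwx hwb hwv₃]; omega
  -- apply the deletion lemma
  refine deletion_contra hmin hbad x l₂ ?_ ?_ ?_ ?_ ?_
  · -- Nodup
    simp only [hl₂def, List.nodup_cons, List.mem_cons]
    push_neg
    exact ⟨⟨fun h => hbv₃' h.symm, hv₃t⟩, hbt, hndt⟩
  · -- membership
    intro v
    have hv := hcompl v
    rw [hl] at hv
    simp only [List.mem_cons] at hv
    simp only [hl₂def, List.mem_cons]
    constructor
    · rintro (rfl | rfl | hv')
      · exact fun h => hxv₃ne h.symm
      · exact fun h => hxb' h.symm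
      · exact fun h => hxt (h ▸ hv')
    · intro hvx
      rcases hv with rfl | rfl | rfl | hv'
      · exact absurd rfl hvx
      · exact Or.inr (Or.inl rfl)
      · exact Or.inl rfl
      · exact Or.inr (Or.inr hv')
  · -- connectivity
    intro v hvx h0
    by_cases hvv₃ : v = v₃
    · rw [hvv₃, hidx2_v₃] at h0; exact absurd rfl h0
    by_cases hvb : v = b
    · refine ⟨v₃, fun h => hxv₃ne h.symm, by rw [hvb]; exact hbv₃.symm, ?_⟩
      rw [hvb, hidx2_v₃, hidx2_b]; omega
    · have hvl := hcompl v
      have hidxv : idx l v = idx tl₃ v + 3 := hidx_other v hvx hvb hvv₃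
      obtain ⟨w, hadj, hlt⟩ := connOrder_exists_earlier hbad.1 hvl (by omega)
      by_cases hwx : w = x
      · rw [hwx] at hadj
        obtain ⟨w', hw'x, hw'adj, hw'lt, -⟩ := hcomp v hadj hvb
        exact ⟨w', hw'x, hw'adj, (T1 v hvx hvb hvv₃ w' hw'x).2 hw'lt⟩
      · exact ⟨w, hwx, hadj, (T1 v hvx hvb hvv₃ w hwx).2 hlt⟩
  · -- palettes
    intro v hvx
    by_cases hvv₃ : v = v₃
    · rw [hvv₃, hπv₃]
      refine nat_sInf_eq ⟨le_refl 1, fun w hadj hwx hlt => ?_⟩ ?_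
      · rw [hidx2_v₃] at hlt; omega
      · rintro m hm ⟨h1, -⟩; omega
    by_cases hvb : v = b
    · rw [hvb, hπb]
      refine nat_sInf_eq ⟨by omega, fun w hadj hwx hlt => ?_⟩ ?_
      · rw [hidx2_b] at hlt
        have hw0 : idx l₂ w = 0 := by omega
        have hwl₂ : w ∈ l₂ := mem_of_idx_lt (by rw [hw0]; simp [hl₂def])
        have : w = v₃ := idx_inj hwl₂ (by simp [hl₂def]) (by rw [hw0, hidx2_v₃])
        rw [this, hπv₃]; omega
      · rintro m hm ⟨h1, hall⟩
        have := hall v₃ hbv₃ (fun h => hxv₃ne h.symm)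
          (by rw [hidx2_v₃, hidx2_b]; omega)
        rw [hπv₃] at this
        omega
    · rw [greedy_eq_sInf_pal hnd (hcompl v)]
      congr 1
      ext c
      simp only [pal, Set.mem_setOf_eq]
      constructor
      · rintro ⟨h1, h2⟩
        refine ⟨h1, fun w hadj hlt => ?_⟩
        by_cases hwx : w = x
        · rw [hwx] at hadj ⊢
          obtain ⟨w', hw'x, hw'adj, hw'lt, hw'col⟩ := hcomp v hadj.symm hvb
          have := h2 w' hw'adj.symm hw'x ((T1 v hvx hvb hvv₃ w' hw'x).2 hw'lt)
          rw [hw'col] at this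
          exact this
        · exact h2 w hadj hwx ((T1 v hvx hvb hvv₃ w hwx).2 hlt)
      · rintro ⟨h1, h2⟩
        exact ⟨h1, fun w hadj hwx hlt =>
          h2 w hadj ((T1 v hvx hvb hvv₃ w hwx).1 hlt)⟩
  · -- the colour of x is small
    rw [hπx]
    have := two_le_chi hxb
    omega


end Aux

theorem stmt14 {V : Type*} [Fintype V] (G : SimpleGraph V) (l : List V)
    (hmin : MinimallyBad G) (hbad : BadOrder G l)
    (k : ℕ) (hk : 2 ≤ k) (s a : Fin k → V)
    (hsmono : ∀ i j : Fin k, i < j → idx l (s i) < idx l (s j))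
    (hscomp : ∀ i : Fin k, i.1 < k - 1 → G.Adj (s i) (s ⟨k - 1, by omega⟩))
    (hainj : Function.Injective a)
    (haS : ∀ i j : Fin k, a i ≠ s j)
    (hadeg : ∀ i : Fin k, (G.neighborSet (a i)).ncard = 2)
    (haN : ∀ i j : Fin k, G.Adj (a i) (s j) ↔ j = i)
    (hNsub : ∀ i : Fin k, i.1 < k - 1 → ∀ u : V, G.Adj (s i) u →
      u ≠ a i → u ≠ s ⟨k - 1, by omega⟩ → G.Adj (s ⟨k - 1, by omega⟩) u)
    (hak : idx l (a ⟨k - 1, by omega⟩) < idx l (s ⟨k - 1, by omega⟩)) :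
    (∀ v : V, G.Adj (s ⟨k - 1, by omega⟩) v → v ≠ a ⟨k - 1, by omega⟩ →
      idx l v < idx l (s ⟨k - 1, by omega⟩) →
      greedy G l v ≠ greedy G l (a ⟨k - 1, by omega⟩)) ∧
    ((∀ i : Fin k, greedy G l (a i) = 1) ∨ (∀ i : Fin k, greedy G l (a i) = 2)) ∧
    (∀ i j : Fin k, i ≠ j → ¬ G.Adj (a i) (a j)) := by
  classical
  have hnd := hbad.1.1
  have hcompl := hbad.1.2.1
  set K : Fin k := ⟨k - 1, by omega⟩ with hK
  have hadjSI : ∀ i : Fin k, G.Adj (a i) (s i) := fun i => (haN i i).2 rfl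
  have chi3 : 3 ≤ chi G := three_le_chi hbad (hadjSI K)
  -- second neighbours of the pendant vertices
  have hnbr : ∀ i : Fin k, ∃ b : V, b ≠ s i ∧
      (∀ w, G.Adj (a i) w ↔ (w = s i ∨ w = b)) := by
    intro i
    obtain ⟨p, q, hpq, hset⟩ := Set.ncard_eq_two.mp (hadeg i)
    have hsmem : s i ∈ G.neighborSet (a i) := (G.mem_neighborSet _ _).2 (hadjSI i)
    rw [hset] at hsmem
    simp only [Set.mem_insert_iff, Set.mem_singleton_iff] at hsmem
    have hchar : ∀ w, G.Adj (a i) w ↔ (w = p ∨ w = q) := by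
      intro w
      rw [← G.mem_neighborSet, hset]
      simp [Set.mem_insert_iff]
    rcases hsmem with h | h
    · refine ⟨q, fun hh => hpq (by rw [← h, ← hh]), fun w => ?_⟩
      rw [hchar w, ← h]
    · refine ⟨p, fun hh => hpq (by rw [← h, ← hh]), fun w => ?_⟩
      rw [hchar w, ← h]
      tauto
  choose bb hbbne hbbadj using hnbr
  have hadjBB : ∀ i : Fin k, G.Adj (a i) (bb i) :=
    fun i => (hbbadj i (bb i)).2 (Or.inr rfl)
  -- the colour of any pendant vertex is at most 3
  have hπle3 : ∀ i : Fin k, greedy G l (a i) ≤ 3 := by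
    intro i
    obtain ⟨c, hc1, hc3, hcs, hcb⟩ : ∃ c, 1 ≤ c ∧ c ≤ 3 ∧
        c ≠ greedy G l (s i) ∧ c ≠ greedy G l (bb i) := by
      by_cases h1 : greedy G l (s i) = 1 ∨ greedy G l (bb i) = 1
      · by_cases h2 : greedy G l (s i) = 2 ∨ greedy G l (bb i) = 2
        · exact ⟨3, by omega, by omega, by omega, by omega⟩
        · exact ⟨2, by omega, by omega, by omega, by omega⟩
      · exact ⟨1, by omega, by omega, by omega, by omega⟩
    rw [greedy_eq_sInf_pal hnd (hcompl _)]
    refine le_trans (Nat.sInf_le ⟨hc1, fun w hadj hltw => ?_⟩) hc3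
    rcases (hbbadj i w).1 hadj with rfl | rfl
    · exact Ne.symm hcs
    · exact Ne.symm hcb
  -- the colour of (a K) is 1 or 2
  have hπaK_ge1 : 1 ≤ greedy G l (a K) := one_le_greedy hnd (hcompl _)
  have hπaK_le2 : greedy G l (a K) ≤ 2 := by
    rw [greedy_eq_sInf_pal hnd (hcompl _)]
    refine le_trans (Nat.sInf_le (⟨?_, fun w hadj hltw => ?_⟩ :
      (if greedy G l (bb K) = 1 then 2 else 1) ∈ pal G l (a K))) ?_
    · split <;> omega
    · rcases (hbbadj K w).1 hadj with rfl | rfl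
      · exact absurd hltw (by omega)
      · split
        · next h => rw [h]; omega
        · next h => exact h
    · split <;> omega
  -- STATEMENT (1)
  have stmt1 : ∀ v, G.Adj (s K) v → v ≠ a K → idx l v < idx l (s K) →
      greedy G l v ≠ greedy G l (a K) := by
    intro v₀ hadj₀ hne₀ hlt₀ hcol₀
    by_cases h0 : idx l (a K) = 0
    · -- (a K) is the first vertex of the order
      have hπaK1 : greedy G l (a K) = 1 := by
        rw [greedy_eq_sInf_pal hnd (hcompl _)]
        refine nat_sInf_eq ⟨le_refl 1, fun w hadj hltw => ?_⟩ ?_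
        · rw [h0] at hltw; omega
        · rintro m hm ⟨h1, -⟩; omega
      have h1v₀ : idx l v₀ ≠ 0 := by
        intro h
        exact hne₀ (idx_inj (hcompl v₀) (hcompl (a K)) (by rw [h, h0]))
      have hlen3 : 3 ≤ l.length := by
        have := idx_lt_length (hcompl (s K))
        omega
      -- decompose the order
      have hne1 : l ≠ [] := by intro h; rw [h] at hlen3; simp at hlen3
      obtain ⟨c0, t0, hl0⟩ := List.exists_cons_of_ne_nil hne1
      have hne2 : t0 ≠ [] := by
        intro h; rw [hl0, h] at hlen3; simp at hlen3
      obtain ⟨c1, t1, hl1⟩ := List.exists_cons_of_ne_nil hne2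
      have hne3 : t1 ≠ [] := by
        intro h; rw [hl0, hl1, h] at hlen3; simp at hlen3
      obtain ⟨c2, tl₃, hl2⟩ := List.exists_cons_of_ne_nil hne3
      have hl : l = c0 :: c1 :: c2 :: tl₃ := by rw [hl0, hl1, hl2]
      have hc0 : c0 = a K := by
        refine idx_inj (hcompl c0) (hcompl (a K)) ?_
        rw [h0, hl, idx_cons_self]
      rw [hc0] at hl
      -- nodup facts
      have hnd' := hnd
      rw [hl] at hnd'
      simp only [List.nodup_cons, List.mem_cons] at hnd'
      push_neg at hnd'
      obtain ⟨⟨hac1, hac2, hat⟩, ⟨hc1c2, hc1t⟩, hc2t, hndt⟩ := hnd'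
      -- index of c1 and c2
      have hidxc1 : idx l c1 = 1 := by
        rw [hl, idx_cons_ne _ (fun h => hac1 h.symm), idx_cons_self]
      have hidxc2 : idx l c2 = 2 := by
        rw [hl, idx_cons_ne _ (fun h => hac2 h.symm),
          idx_cons_ne _ (fun h => hc1c2 h.symm), idx_cons_self]
      -- c1 is adjacent to (a K)
      have hadjc1 : G.Adj (a K) c1 := by
        obtain ⟨w, hadjw, hltw⟩ := connOrder_exists_earlier hbad.1 (hcompl c1)
          (by rw [hidxc1]; omega)
        have hw0 : idx l w = 0 := by rw [hidxc1] at hltw; omega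
        have hwa : w = a K := idx_inj (mem_of_idx_lt (by omega)) (hcompl (a K))
          (by rw [hw0, h0])
        rwa [hwa] at hadjw
      -- c1 is the second neighbour of (a K)
      have hc1bb : c1 = bb K := by
        rcases (hbbadj K c1).1 hadjc1 with h | h
        · exfalso
          have : idx l (s K) = 1 := by rw [← h, hidxc1]
          omega
        · exact h
      -- the colour of c1 is 2
      have hπc1 : greedy G l c1 = 2 := by
        rw [greedy_eq_sInf_pal hnd (hcompl c1)]
        refine nat_sInf_eq ⟨by omega, fun w hadj hltw => ?_⟩ ?_
        · rw [hidxc1] at hltw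
          have hwa : w = a K := idx_inj (mem_of_idx_lt (by omega)) (hcompl (a K))
            (by omega)
          rw [hwa, hπaK1]; omega
        · rintro m hm ⟨h1, hall⟩
          have := hall (a K) hadjc1.symm (by rw [h0, hidxc1]; omega)
          rw [hπaK1] at this
          omega
      -- c2 is not (s K)
      have hc2sK : c2 ≠ s K := by
        intro h
        have hsK2 : idx l (s K) = 2 := by rw [← h, hidxc2]
        have hv₀1 : idx l v₀ = 1 := by omega
        have : v₀ = c1 := idx_inj (hcompl v₀) (hcompl c1) (by rw [hv₀1, hidxc1])
        rw [this, hπc1, hπaK1] at hcol₀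
        omega
      -- (a K) is not adjacent to c2
      have hnadj : ¬ G.Adj (a K) c2 := by
        intro h
        rcases (hbbadj K c2).1 h with h' | h'
        · exact hc2sK h'
        · exact hc1c2 (by rw [hc1bb, h'])
      -- c1 is adjacent to c2
      have hbc2 : G.Adj c1 c2 := by
        obtain ⟨w, hadjw, hltw⟩ := connOrder_exists_earlier hbad.1 (hcompl c2)
          (by rw [hidxc2]; omega)
        rw [hidxc2] at hltw
        have h01 : idx l w = 0 ∨ idx l w = 1 := by omega
        rcases h01 with hw | hw
        · exfalso
          have hwa : w = a K := idx_inj (mem_of_idx_lt (by omega)) (hcompl (a K))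
            (by rw [hw, h0])
          rw [hwa] at hadjw
          exact hnadj hadjw
        · have hwc1 : w = c1 := idx_inj (mem_of_idx_lt (by omega)) (hcompl c1)
            (by rw [hw, hidxc1])
          rwa [hwc1] at hadjw
      -- conclude by deleting (a K)
      refine first_del hmin hbad hl hadjc1 hnadj hbc2 ?_
      intro v hadj hvb
      rcases (hbbadj K v).1 hadj with rfl | rfl
      · exact ⟨v₀, hne₀, hadj₀.symm, hlt₀, hcol₀⟩
      · exact absurd hc1bb.symm hvb
    · -- (a K) is not the first vertex
      obtain ⟨w, hadjw, hltw⟩ := connOrder_exists_earlier hbad.1 (hcompl (a K)) h0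
      have hblt : idx l (bb K) < idx l (a K) := by
        rcases (hbbadj K w).1 hadjw.symm with h | h
        · exfalso; rw [h] at hltw; omega
        · rwa [h] at hltw
      refine erase_del hmin hbad (a K) h0 ?_ (by omega)
      intro v hadj hltv
      rcases (hbbadj K v).1 hadj with rfl | rfl
      · exact ⟨v₀, hne₀, hadj₀.symm, hlt₀, hcol₀⟩
      · exact absurd hltv (by omega)
  -- STATEMENT (2): all pendant vertices have the colour of (a K)
  have claim2 : ∀ i : Fin k, greedy G l (a i) = greedy G l (a K) := by
    intro i
    by_cases hiK : i = K
    · rw [hiK]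
    have hik : i.1 < k - 1 := by
      have h1 := i.isLt
      have h2 : i.1 ≠ k - 1 := fun h => hiK (Fin.ext h)
      omega
    have hsadj : G.Adj (s i) (s K) := hscomp i hik
    have hsilt : idx l (s i) < idx l (s K) := hsmono i K (Fin.lt_def.2 hik)
    have hsine : s i ≠ a K := fun h => haS K i h.symm
    have hπsi : greedy G l (s i) ≠ greedy G l (a K) := stmt1 (s i) hsadj.symm hsine hsilt
    have NICE : ∀ u, G.Adj (s i) u → u ≠ a i → idx l u < idx l (s K) →
        greedy G l u ≠ greedy G l (a K) := by
      intro u hadju hune hult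
      have husK : u ≠ s K := by intro h; rw [h] at hult; omega
      have huaK : u ≠ a K := by
        intro h
        rw [h] at hadju
        exact hiK ((haN K i).1 hadju.symm)
      exact stmt1 u (hNsub i hik u hadju hune husK) huaK hult
    have hcase : greedy G l (a K) = 1 ∨ greedy G l (a K) = 2 := by omega
    rcases hcase with hcc1 | hcc2
    · -- the colour of (a K) is 1
      rw [hcc1]
      by_contra hne1
      have hsi1 : greedy G l (s i) ≠ 1 := by rw [hcc1] at hπsi; exact hπsi
      have hgt1 : 1 < greedy G l (s i) :=
        lt_of_le_of_ne (one_le_greedy hnd (hcompl _)) (Ne.symm hsi1)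
      obtain ⟨w₁, hadj₁, hlt₁, hcol₁⟩ :=
        exists_earlier_nbr_of_lt hnd (hcompl (s i)) (le_refl 1) hgt1
      by_cases hw₁ : w₁ = a i
      · rw [hw₁] at hcol₁; exact hne1 hcol₁
      · exact NICE w₁ hadj₁ hw₁ (lt_trans hlt₁ hsilt) (by rw [hcol₁, hcc1])
    · -- the colour of (a K) is 2
      rw [hcc2]
      have hsi2 : greedy G l (s i) ≠ 2 := by rw [hcc2] at hπsi; exact hπsi
      by_cases hsi3 : 3 ≤ greedy G l (s i)
      · obtain ⟨w₂, hadj₂, hlt₂, hcol₂⟩ :=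
          exists_earlier_nbr_of_lt (G := G) (m := 2) hnd (hcompl (s i)) (by omega) (by omega)
        by_cases hw₂ : w₂ = a i
        · rw [hw₂] at hcol₂; exact hcol₂
        · exfalso
          have := NICE w₂ hadj₂ hw₂ (lt_trans hlt₂ hsilt)
          rw [hcc2] at this
          exact this hcol₂
      · -- the colour of (s i) is 1
        have hsi1' : greedy G l (s i) = 1 := by
          have := one_le_greedy (G := G) hnd (hcompl (s i))
          omega
        have hne_as : a i ≠ s i := haS i i
        rcases Nat.lt_trichotomy (idx l (a i)) (idx l (s i)) with hlt | heq | hgt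
        · -- (a i) comes before (s i)
          have hne1 : greedy G l (a i) ≠ 1 := by
            have := (greedy_mem_pal hnd (hcompl (s i))).2 (a i) (hadjSI i).symm hlt
            rw [hsi1'] at this
            exact this
          have hle2 : greedy G l (a i) ≤ 2 := by
            rw [greedy_eq_sInf_pal hnd (hcompl _)]
            refine le_trans (Nat.sInf_le (⟨?_, fun w hadj hltw => ?_⟩ :
              (if greedy G l (bb i) = 1 then 2 else 1) ∈ pal G l (a i))) ?_
            · split <;> omega
            · rcases (hbbadj i w).1 hadj with rfl | rfl
              · exact absurd hltw (by omega)
              · split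
                · next h => rw [h]; omega
                · next h => exact h
            · split <;> omega
          have hge1 : 1 ≤ greedy G l (a i) := one_le_greedy hnd (hcompl _)
          omega
        · exact absurd (idx_inj (hcompl _) (hcompl _) heq) hne_as
        · -- (s i) comes before (a i)
          have hbblt : idx l (a i) < idx l (bb i) := by
            rcases Nat.lt_trichotomy (idx l (a i)) (idx l (bb i)) with h | h | h
            · exact h
            · exact absurd (idx_inj (hcompl _) (hcompl _) h) (hadjBB i).ne
            · exfalso
              refine erase_del hmin hbad (a i) (by omega) ?_ ?_
              · intro v hadj hltv
                rcases (hbbadj i v).1 hadj with rfl | rfl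
                · exact absurd hltv (by omega)
                · exact absurd hltv (by omega)
              · have := hπle3 i
                omega
          rw [greedy_eq_sInf_pal hnd (hcompl _)]
          refine nat_sInf_eq ⟨by omega, fun w hadj hltw => ?_⟩ ?_
          · rcases (hbbadj i w).1 hadj with rfl | rfl
            · rw [hsi1']; omega
            · exact absurd hltw (by omega)
          · rintro m hm ⟨h1, hall⟩
            have := hall (s i) (hadjSI i) hgt
            rw [hsi1'] at this
            omega
  -- assemble the three statements
  refine ⟨stmt1, ?_, ?_⟩
  · have hcase : greedy G l (a K) = 1 ∨ greedy G l (a K) = 2 := by omega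
    rcases hcase with h | h
    · exact Or.inl (fun i => by rw [claim2 i, h])
    · exact Or.inr (fun i => by rw [claim2 i, h])
  · intro i j hij hadj
    have hne : greedy G l (a i) ≠ greedy G l (a j) :=
      greedy_proper hnd (hcompl _) (hcompl _) hadj
    rw [claim2 i, claim2 j] at hne
    exact hne rfl
end

section
/- Every gem-free chordal graph is distance-hereditary: if G is chordal and has no induced gem, then for every connected induced subgraph H of G and every pair of vertices u, v of H, the distance between u and v in H equals the distance between u and v in G. -/
namespace DHAux

open List
variable {V : Type*} {G : SimpleGraph V}

def IsInducedPath' (G : SimpleGraph V) (P : List V) : Prop :=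
  P.Nodup ∧ ∀ i j : Fin P.length,
    G.Adj (P.get i) (P.get j) ↔ (i.1 + 1 = j.1 ∨ j.1 + 1 = i.1)

lemma induced_adj_iff {P : List V} (hP : IsInducedPath' G P) {i j : ℕ}
    (hi : i < P.length) (hj : j < P.length) :
    G.Adj P[i] P[j] ↔ (i + 1 = j ∨ j + 1 = i) := by
  simpa using hP.2 ⟨i, hi⟩ ⟨j, hj⟩

lemma chain'_of_induced {P : List V} (hP : IsInducedPath' G P) : List.Chain' G.Adj P := by
  unfold List.Chain'
  rw [List.isChain_iff_getElem]
  intro i h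
  exact (induced_adj_iff hP (by omega) (by omega)).2 (Or.inl rfl)

lemma infix_induced {P : List V} (hP : IsInducedPath' G P) (a len : ℕ)
    (h : a + len ≤ P.length) : IsInducedPath' G ((P.drop a).take len) := by
  have hlen : ((P.drop a).take len).length = len := by simp; omega
  have hget : ∀ k (hk : k < ((P.drop a).take len).length),
      ((P.drop a).take len)[k] = P[a + k]'(by rw [hlen] at hk; omega) := by
    intro k hk
    rw [List.getElem_take, List.getElem_drop]
  constructor
  · exact ((List.take_sublist _ _).trans (P.drop_sublist a)).nodup hP.1
  · intro i j
    simp only [List.get_eq_getElem, hget i.1 i.2, hget j.1 j.2]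
    rw [induced_adj_iff hP]
    omega

lemma exists_walk_chain : ∀ (L : List V) (u v : V), List.Chain' G.Adj (u :: L) →
    (u :: L).getLast (by simp) = v → ∃ p : G.Walk u v, p.length = L.length := by
  intro L
  induction L with
  | nil =>
    intro u v _ h
    simp only [List.getLast_singleton] at h
    subst h
    exact ⟨SimpleGraph.Walk.nil, rfl⟩
  | cons a L ih =>
    intro u v hc hl
    unfold List.Chain' at hc
    rw [List.isChain_cons_cons] at hc
    obtain ⟨p, hp⟩ := ih a v hc.2 (by rw [List.getLast_cons (by simp)] at hl; exact hl)
    exact ⟨SimpleGraph.Walk.cons hc.1 p, by simp [hp]⟩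

lemma dist_chain (L : List V) (hne : L ≠ []) (hc : List.Chain' G.Adj L) :
    G.Reachable (L.head hne) (L.getLast hne) ∧
      G.dist (L.head hne) (L.getLast hne) + 1 ≤ L.length := by
  obtain ⟨u, T, rfl⟩ := List.exists_cons_of_ne_nil hne
  obtain ⟨p, hp⟩ := exists_walk_chain T u ((u :: T).getLast (by simp)) hc rfl
  refine ⟨⟨p⟩, ?_⟩
  have := SimpleGraph.dist_le p
  simp only [List.head_cons, List.length_cons]
  omega

lemma getElem_congr' (l : List V) {a b : ℕ} (h : a = b) (ha : a < l.length) :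
    l[a] = l[b]'(h ▸ ha) := by subst h; rfl

lemma exists_induced_min {u v : V} (hr : G.Reachable u v) :
    ∃ (L : List V) (hne : L ≠ []), L.head hne = u ∧ L.getLast hne = v ∧
      IsInducedPath' G L ∧ L.length = G.dist u v + 1 := by
  obtain ⟨p, hp⟩ := hr.exists_walk_length_eq_dist
  obtain ⟨L, hLs⟩ : ∃ L, L = p.support := ⟨_, rfl⟩
  have hLne : L ≠ [] := by rw [hLs]; exact p.support_ne_nil
  have hchain : List.Chain' G.Adj L := by rw [hLs]; exact p.isChain_adj_support
  have hnd : L.Nodup := by rw [hLs]; exact (p.isPath_of_length_eq_dist hp).support_nodup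
  have hlen : L.length = G.dist u v + 1 := by
    rw [hLs, SimpleGraph.Walk.length_support, hp]
  have hheadL : L.head hLne = u := by subst hLs; exact p.head_support
  have hlastL : L.getLast hLne = v := by subst hLs; exact p.getLast_support
  refine ⟨L, hLne, hheadL, hlastL, ⟨hnd, ?_⟩, hlen⟩
  have hhead : L[0]'(by omega) = u := by
    rw [← List.head_eq_getElem_zero hLne]; exact hheadL
  have hlast : L[L.length - 1]'(by omega) = v := by
    rw [← List.getLast_eq_getElem]; exact hlastL
  have key : ∀ i j : ℕ, ∀ (hi : i < L.length) (hj : j < L.length), i + 2 ≤ j →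
      ¬ G.Adj L[i] L[j] := by
    intro i j hi hj hij hadj
    have htlen : (L.take (i+1)).length = i + 1 := by
      rw [List.length_take]; omega
    have hdlen : (L.drop j).length = L.length - j := List.length_drop
    have htne : L.take (i+1) ≠ [] := by
      intro h; rw [h] at htlen; simp at htlen
    have hdne : L.drop j ≠ [] := by
      intro h; rw [h] at hdlen; simp at hdlen; omega
    have hlen' : (L.take (i+1) ++ L.drop j).length = (i+1) + (L.length - j) := by
      rw [List.length_append, htlen, hdlen]
    have hne' : L.take (i+1) ++ L.drop j ≠ [] := by
      intro h; rw [h] at hlen'; simp at hlen'; omega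
    have h1 : (L.take (i+1)).getLast htne = L[i] := by
      rw [List.getLast_eq_getElem]
      rw [getElem_congr' _ (by rw [htlen]) _, List.getElem_take]
      exact getElem_congr' L (by omega) _
    have h2 : (L.drop j).head hdne = L[j] := by
      rw [List.head_eq_getElem_zero, List.getElem_drop]
      exact getElem_congr' L (by omega) _
    have hchain' : List.Chain' G.Adj (L.take (i+1) ++ L.drop j) := by
      unfold List.Chain'
      rw [List.isChain_append]
      refine ⟨hchain.take _, hchain.drop _, ?_⟩
      intro x hx y hy
      rw [List.getLast?_eq_getLast htne, Option.mem_some_iff] at hx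
      rw [List.head?_eq_head hdne, Option.mem_some_iff] at hy
      subst hx; subst hy
      rw [h1, h2]
      exact hadj
    have hh : (L.take (i+1) ++ L.drop j).head hne' = u := by
      rw [List.head_eq_getElem_zero]
      rw [List.getElem_append_left (by omega)]
      rw [List.getElem_take]
      exact hhead
    have hl : (L.take (i+1) ++ L.drop j).getLast hne' = v := by
      rw [List.getLast_eq_getElem]
      rw [List.getElem_append_right (by rw [htlen]; omega)]
      rw [List.getElem_drop]
      have harith : j + ((L.take (i+1) ++ L.drop j).length - 1 - (L.take (i+1)).length)
          = L.length - 1 := by rw [hlen', htlen]; omega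
      rw [getElem_congr' L harith _]
      exact hlast
    have hd := (dist_chain _ hne' hchain').2
    rw [hh, hl, hlen'] at hd
    omega
  intro i j
  simp only [List.get_eq_getElem]
  constructor
  · intro hadj
    by_contra hcon
    push_neg at hcon
    have hij : i.1 ≠ j.1 := by
      intro h
      rw [getElem_congr' L h] at hadj
      exact G.irrefl hadj
    rcases Nat.lt_or_ge i.1 j.1 with h | h
    · exact key i.1 j.1 i.2 j.2 (by omega) hadj
    · exact key j.1 i.1 j.2 i.2 (by omega) hadj.symm
  · unfold List.Chain' at hchain
    rw [List.isChain_iff_getElem] at hchain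
    rintro (h | h)
    · have := hchain i.1 (by omega)
      convert this using 2
      omega
    · have := (hchain j.1 (by omega)).symm
      convert this using 2
      omega

lemma induced_append {Q : List V} (hQ : IsInducedPath' G Q) (m : V) (hne : Q ≠ [])
    (hm : m ∉ Q) (hlast : G.Adj m (Q.getLast hne))
    (hother : ∀ k, (hk : k + 1 < Q.length) → ¬ G.Adj m (Q[k]'(by omega))) :
    IsInducedPath' G (Q ++ [m]) := by
  have hQne : 0 < Q.length := List.length_pos_iff.2 hne
  have hgetm : ∀ (h : Q.length < (Q ++ [m]).length), (Q ++ [m])[Q.length] = m := by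
    intro h
    rw [List.getElem_append_right (le_refl _)]
    simp
  constructor
  · rw [List.nodup_append']
    exact ⟨hQ.1, List.nodup_singleton m, by simpa [List.disjoint_singleton] using hm⟩
  · intro i j
    have hi := i.2; have hj := j.2
    simp only [List.length_append, List.length_singleton] at hi hj
    simp only [List.get_eq_getElem]
    rcases Nat.lt_or_ge i.1 Q.length with hiq | hiq <;>
      rcases Nat.lt_or_ge j.1 Q.length with hjq | hjq
    · rw [List.getElem_append_left hiq, List.getElem_append_left hjq]
      exact induced_adj_iff hQ hiq hjq
    · have hj' : j.1 = Q.length := by omega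
      rw [List.getElem_append_left hiq]
      rw [getElem_congr' _ hj' _, hgetm]
      constructor
      · intro hadj
        left
        by_contra hcon
        exact hother i.1 (by omega) hadj.symm
      · rintro (h | h)
        · have : Q[i.1] = Q.getLast hne := by
            rw [List.getLast_eq_getElem]
            exact getElem_congr' _ (by omega) _
          rw [this]
          exact hlast.symm
        · omega
    · have hi' : i.1 = Q.length := by omega
      rw [List.getElem_append_left hjq]
      rw [getElem_congr' _ hi' _, hgetm]
      constructor
      · intro hadj
        right
        by_contra hcon
        exact hother j.1 (by omega) hadj
      · rintro (h | h)
        · omega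
        · have : Q[j.1] = Q.getLast hne := by
            rw [List.getLast_eq_getElem]
            exact getElem_congr' _ (by omega) _
          rw [this]
          exact hlast
    · have hi' : i.1 = Q.length := by omega
      have hj' : j.1 = Q.length := by omega
      rw [getElem_congr' _ hi' _, getElem_congr' _ hj' _, hgetm]
      constructor
      · intro hadj
        exact absurd hadj (G.irrefl)
      · intro h
        exact absurd h (by omega)

lemma hole_of (m : V) {Q : List V} (hQ : IsInducedPath' G Q) (h3 : 3 ≤ Q.length)
    (hm : m ∉ Q)
    (hadjm : ∀ k, (hk : k < Q.length) → (G.Adj m Q[k] ↔ (k = 0 ∨ k = Q.length - 1))) :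
    IsHole G (m :: Q) := by
  refine ⟨by simp; omega, by rw [List.nodup_cons]; exact ⟨hm, hQ.1⟩, ?_⟩
  intro i j
  have hi := i.2; have hj := j.2
  simp only [List.length_cons] at hi hj ⊢
  simp only [List.get_eq_getElem, List.length_cons]
  obtain ⟨iv, hi'⟩ := i
  obtain ⟨jv, hj'⟩ := j
  simp only [Fin.val_mk, List.length_cons] at hi' hj' ⊢
  rcases iv with _ | a <;> rcases jv with _ | b
  · simp only [List.getElem_cons_zero]
    rw [Nat.mod_eq_of_lt (by omega)]
    constructor
    · intro h; exact absurd h (G.irrefl)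
    · intro h; exact absurd h (by omega)
  · simp only [List.getElem_cons_zero, List.getElem_cons_succ]
    rw [hadjm b (by omega)]
    rw [Nat.mod_eq_of_lt (by omega : 0 + 1 < Q.length + 1)]
    rcases Nat.lt_or_ge (b + 1 + 1) (Q.length + 1) with h | h
    · rw [Nat.mod_eq_of_lt h]
      omega
    · have : b + 1 + 1 = Q.length + 1 := by omega
      rw [this, Nat.mod_self]
      omega
  · simp only [List.getElem_cons_zero, List.getElem_cons_succ]
    rw [SimpleGraph.adj_comm]
    rw [hadjm a (by omega)]
    rw [Nat.mod_eq_of_lt (by omega : 0 + 1 < Q.length + 1)]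
    rcases Nat.lt_or_ge (a + 1 + 1) (Q.length + 1) with h | h
    · rw [Nat.mod_eq_of_lt h]
      omega
    · have : a + 1 + 1 = Q.length + 1 := by omega
      rw [this, Nat.mod_self]
      omega
  · simp only [List.getElem_cons_succ]
    rw [induced_adj_iff hQ (by omega) (by omega)]
    rcases Nat.lt_or_ge (a + 1 + 1) (Q.length + 1) with h | h <;>
      rcases Nat.lt_or_ge (b + 1 + 1) (Q.length + 1) with h2 | h2
    · rw [Nat.mod_eq_of_lt h, Nat.mod_eq_of_lt h2]
      omega
    · rw [Nat.mod_eq_of_lt h]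
      rw [(by omega : b + 1 + 1 = Q.length + 1), Nat.mod_self]
      omega
    · rw [Nat.mod_eq_of_lt h2]
      rw [(by omega : a + 1 + 1 = Q.length + 1), Nat.mod_self]
      omega
    · have e1 : (a + 1 + 1) % (Q.length + 1) = 0 := by
        rw [(by omega : a + 1 + 1 = Q.length + 1)]; exact Nat.mod_self _
      have e2 : (b + 1 + 1) % (Q.length + 1) = 0 := by
        rw [(by omega : b + 1 + 1 = Q.length + 1)]; exact Nat.mod_self _
      constructor
      · intro hx
        exact absurd hx (by omega)
      · intro hx
        have hx' : (a + 1 + 1) % (Q.length + 1) = b + 1 ∨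
            (b + 1 + 1) % (Q.length + 1) = a + 1 := hx
        exact absurd hx' (by omega)

lemma take_getLast (P : List V) (k : ℕ) (hk : k < P.length) (h : P.take (k+1) ≠ []) :
    (P.take (k+1)).getLast h = P[k] := by
  rw [List.getLast_eq_getElem]
  have hlen : (P.take (k+1)).length = k + 1 := by rw [List.length_take]; omega
  rw [getElem_congr' _ (by rw [hlen]) _, List.getElem_take]
  exact getElem_congr' _ (by omega) _

lemma take_ne_nil (P : List V) (k : ℕ) (hk : k < P.length) : P.take (k+1) ≠ [] := by
  intro h
  have := congrArg List.length h
  simp only [List.length_take, List.length_nil] at this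
  omega

lemma take_head (P : List V) (hne : P ≠ []) (k : ℕ) (hk : k < P.length)
    (h : P.take (k+1) ≠ []) : (P.take (k+1)).head h = P.head hne := by
  rw [List.head_eq_getElem_zero, List.head_eq_getElem_zero, List.getElem_take]

lemma take_induced {P : List V} (hP : IsInducedPath' G P) (k : ℕ) (hk : k < P.length) :
    IsInducedPath' G (P.take (k+1)) := by
  have := infix_induced hP 0 (k+1) (by omega)
  rwa [List.drop_zero] at this

open Classical in
lemma main_aux (hchordal : ∀ C : List V, ¬ IsHole G C) (hgem : GemFree G) :
    ∀ d : ℕ, ∀ u v : V, G.dist u v = d →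
      ∀ P, ∀ hne : P ≠ [], IsInducedPath' G P → P.head hne = u → P.getLast hne = v →
        P.length = d + 1 := by
  intro d
  induction d using Nat.strong_induction_on with
  | _ d IH =>
  intro u v hd P hne hP hh hl
  have hchainP := chain'_of_induced hP
  have hdc := dist_chain P hne hchainP
  have hreach : G.Reachable u v := by rw [← hh, ← hl]; exact hdc.1
  have hdistle : d + 1 ≤ P.length := by
    have := hdc.2; rw [hh, hl, hd] at this; exact this
  have hPpos : 0 < P.length := List.length_pos_iff.2 hne
  have hhead0 : P[0]'hPpos = u := by rw [← List.head_eq_getElem_zero hne]; exact hh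
  have hlastn : P[P.length - 1]'(by omega) = v := by
    rw [← List.getLast_eq_getElem]; exact hl
  by_contra hcon
  have hlenP : d + 2 ≤ P.length := by omega
  rcases d with _ | d'
  · -- d = 0
    have huv : u = v := (SimpleGraph.Reachable.dist_eq_zero_iff hreach).mp hd
    have : (0 : ℕ) = P.length - 1 := by
      apply (List.Nodup.getElem_inj_iff hP.1).mp
      rw [hhead0, hlastn, huv]
    omega
  rcases d' with _ | e
  · -- d = 1
    have hadj : G.Adj u v := SimpleGraph.dist_eq_one_iff_adj.mp hd
    have : G.Adj P[0] (P[P.length - 1]'(by omega)) := by rw [hhead0, hlastn]; exact hadj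
    rw [induced_adj_iff hP] at this
    omega
  -- d = e + 2
  obtain ⟨L, hLne, hLh, hLl, hLind, hLlen⟩ := exists_induced_min hreach
  rw [hd] at hLlen
  have hm_lt : e + 1 < L.length := by omega
  have hLlast : L[L.length - 1]'(by omega) = v := by
    rw [← List.getLast_eq_getElem]; exact hLl
  set m := L[e+1]'hm_lt with hm
  have hmv : G.Adj m v := by
    have h1 : G.Adj (L[e+1]'hm_lt) (L[e+2]'(by omega)) :=
      (induced_adj_iff hLind hm_lt (by omega)).mpr (Or.inl rfl)
    have h2 : L[e+2]'(by omega) = v := by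
      rw [getElem_congr' L (by omega : e + 2 = L.length - 1) _]
      exact hLlast
    rwa [h2] at h1
  have hTne : L.take (e+1+1) ≠ [] := take_ne_nil L (e+1) hm_lt
  have hThead : (L.take (e+1+1)).head hTne = u := by
    rw [take_head L hLne (e+1) hm_lt]; exact hLh
  have hTlast : (L.take (e+1+1)).getLast hTne = m := take_getLast L (e+1) hm_lt hTne
  have hTdc := dist_chain _ hTne ((chain'_of_induced hLind).take (e+1+1))
  rw [hThead, hTlast] at hTdc
  have hTlen : (L.take (e+1+1)).length = e + 2 := by rw [List.length_take]; omega
  have hreach_um : G.Reachable u m := hTdc.1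
  have hdistum_le : G.dist u m ≤ e + 1 := by
    have := hTdc.2; rw [hTlen] at this; omega
  have hdistum_ge : e + 2 ≤ G.dist u m + 1 := by
    obtain ⟨w, hw⟩ := hreach_um.exists_walk_length_eq_dist
    have h3 := SimpleGraph.dist_le (w.concat hmv)
    rw [SimpleGraph.Walk.length_concat, hw, hd] at h3
    omega
  have hdum : G.dist u m = e + 1 := by omega
  have hmP : ∀ k, ∀ hk : k < P.length, m ≠ P[k] := by
    intro k hk heq
    have hwhich : k + 1 = P.length - 1 := by
      have hadj2 : G.Adj (P[k]) (P[P.length - 1]'(by omega)) := by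
        rw [← heq, hlastn]; exact hmv
      rw [induced_adj_iff hP hk (by omega)] at hadj2
      omega
    have hT'len := IH (e+1) (by omega) u m hdum (P.take (k+1)) (take_ne_nil P k hk)
      (take_induced hP k hk)
      (by rw [take_head P hne k hk]; exact hh)
      (by rw [take_getLast P k hk]; exact heq.symm)
    rw [List.length_take] at hT'len
    omega
  set S := {k : ℕ | ∃ hk : k < P.length, G.Adj m (P[k]'hk)} with hS
  have hnS : P.length - 1 ∈ S := ⟨by omega, by rw [hlastn]; exact hmv⟩
  set l := sInf S with hls
  have hlS : l ∈ S := Nat.sInf_mem ⟨_, hnS⟩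
  have hlle : l ≤ P.length - 1 := Nat.sInf_le hnS
  have hlmin : ∀ k, k < l → k ∉ S := fun k hk => Nat.notMem_of_lt_sInf hk
  have hclaim : ∀ k, l ≤ k → k < P.length → k ∈ S := by
    by_contra hcl
    push_neg at hcl
    obtain ⟨j, hjl, hjP, hjS⟩ := hcl
    have hjn : j ≠ P.length - 1 := by intro h; rw [h] at hjS; exact hjS hnS
    have hTn : P.length - 1 ∈ {k : ℕ | j < k ∧ k ∈ S} := ⟨by omega, hnS⟩
    set js := sInf {k : ℕ | j < k ∧ k ∈ S} with hjs
    have hjsT : js ∈ {k : ℕ | j < k ∧ k ∈ S} := Nat.sInf_mem ⟨_, hTn⟩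
    have hjjs : j < js := hjsT.1
    set is := Nat.findGreatest (· ∈ S) j with his
    have hisS : is ∈ S := Nat.findGreatest_spec hjl hlS
    have hisle : is ≤ j := Nat.findGreatest_le j
    have hisj : is ≠ j := by intro h; rw [h] at hisS; exact hjS hisS
    have hgap : ∀ k, is < k → k < js → k ∉ S := by
      intro k h1 h2 hkS
      rcases Nat.lt_or_ge j k with h3 | h3
      · exact absurd (Nat.sInf_le ⟨h3, hkS⟩ : js ≤ k) (by omega)
      · exact Nat.findGreatest_is_greatest h1 h3 hkS
    have hjsP : js < P.length := by
      obtain ⟨hb, _⟩ := hjsT.2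
      exact hb
    have hisjs : is + 2 ≤ js := by omega
    have hseg : is + (js - is + 1) ≤ P.length := by omega
    have hQ := infix_induced hP is (js - is + 1) hseg
    have hQlen : ((P.drop is).take (js - is + 1)).length = js - is + 1 := by
      rw [List.length_take, List.length_drop]; omega
    have hQget : ∀ k, ∀ hk2 : k < ((P.drop is).take (js - is + 1)).length,
        ((P.drop is).take (js - is + 1))[k] = P[is + k]'(by rw [hQlen] at hk2; omega) := by
      intro k hk2
      rw [List.getElem_take, List.getElem_drop]
    refine hchordal (m :: (P.drop is).take (js - is + 1)) (hole_of m hQ ?_ ?_ ?_)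
    · omega
    · intro hmem
      obtain ⟨k, hk, hkeq⟩ := List.mem_iff_getElem.mp hmem
      rw [hQget k hk] at hkeq
      exact hmP _ _ hkeq.symm
    · intro k hk
      rw [hQget k hk]
      simp only [hQlen]
      rw [hQlen] at hk
      constructor
      · intro hadj
        have hkS : is + k ∈ S := ⟨by omega, hadj⟩
        rcases Nat.eq_zero_or_pos k with rfl | hkpos
        · left; rfl
        · right
          by_contra hne2
          exact hgap (is + k) (by omega) (by omega) hkS
      · rintro (rfl | hk1)
        · obtain ⟨hb, hAdj⟩ := hisS
          have : P[is + 0]'(by omega) = P[is]'hb := getElem_congr' _ (by omega) _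
          rw [this]
          exact hAdj
        · obtain ⟨hb, hAdj⟩ := hjsT.2
          have : P[is + k]'(by omega) = P[js]'hb := getElem_congr' _ (by omega) _
          rw [this]
          exact hAdj
  have hl3 : P.length - 1 ≤ l + 2 := by
    by_contra hll
    push_neg at hll
    obtain ⟨hb0, hA0⟩ := hclaim l (le_refl _) (by omega)
    obtain ⟨hb1, hA1⟩ := hclaim (l+1) (by omega) (by omega)
    obtain ⟨hb2, hA2⟩ := hclaim (l+2) (by omega) (by omega)
    obtain ⟨hb3, hA3⟩ := hclaim (l+3) (by omega) (by omega)
    refine hgem ⟨P[l]'hb0, P[l+1]'hb1, P[l+2]'hb2, P[l+3]'hb3, m,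
      (induced_adj_iff hP hb0 hb1).mpr (by omega),
      (induced_adj_iff hP hb1 hb2).mpr (by omega),
      (induced_adj_iff hP hb2 hb3).mpr (by omega),
      fun h => by rw [induced_adj_iff hP hb0 hb2] at h; omega,
      fun h => by rw [induced_adj_iff hP hb0 hb3] at h; omega,
      fun h => by rw [induced_adj_iff hP hb1 hb3] at h; omega,
      hA0, hA1, hA2, hA3⟩
  -- final contradiction
  have hlP : l < P.length := by omega
  have hQ'ne := take_ne_nil P l hlP
  have happ : IsInducedPath' G (P.take (l+1) ++ [m]) := by
    refine induced_append (take_induced hP l hlP) m hQ'ne ?_ ?_ ?_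
    · intro hmem
      obtain ⟨k, hk, hkeq⟩ := List.mem_iff_getElem.mp hmem
      rw [List.getElem_take] at hkeq
      rw [List.length_take] at hk
      exact hmP k (by omega) hkeq.symm
    · rw [take_getLast P l hlP]
      obtain ⟨hb, hAdj⟩ := hlS
      exact hAdj
    · intro k hk
      rw [List.length_take] at hk
      rw [List.getElem_take]
      intro hadj
      exact hlmin k (by omega) ⟨by omega, hadj⟩
  have hPPne : P.take (l+1) ++ [m] ≠ [] := by simp
  have hfin := IH (e+1) (by omega) u m hdum (P.take (l+1) ++ [m]) hPPne happ
    (by rw [List.head_append_left hQ'ne, take_head P hne l hlP]; exact hh)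
    (List.getLast_append_singleton _)
  rw [List.length_append, List.length_take, List.length_singleton] at hfin
  omega

theorem stmt17_aux {V : Type*} [Fintype V] (G : SimpleGraph V)
    (hchordal : ∀ C : List V, ¬ IsHole G C) (hgem : GemFree G) :
    ∀ s : Set V, (G.induce s).Connected →
      ∀ u v : ↥s, (G.induce s).dist u v = G.dist (u : V) (v : V) := by
  intro s hconn u v
  have hr : (G.induce s).Reachable u v := hconn.preconnected u v
  obtain ⟨L, hLne, hLh, hLl, hLind, hLlen⟩ := exists_induced_min hr
  have hmapne : L.map Subtype.val ≠ [] := by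
    intro h
    exact hLne (List.map_eq_nil_iff.mp h)
  have hmaplen : (L.map Subtype.val).length = L.length := List.length_map _
  have hind' : IsInducedPath' G (L.map Subtype.val) := by
    constructor
    · exact hLind.1.map Subtype.val_injective
    · intro i j
      have hi : i.1 < L.length := by have := i.2; omega
      have hj : j.1 < L.length := by have := j.2; omega
      simp only [List.get_eq_getElem, List.getElem_map]
      have := hLind.2 ⟨i.1, hi⟩ ⟨j.1, hj⟩
      simp only [List.get_eq_getElem] at this
      exact this
  have hhead' : (L.map Subtype.val).head hmapne = (u : V) := by
    rw [List.head_eq_getElem_zero, List.getElem_map]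
    rw [← List.head_eq_getElem_zero hLne, hLh]
  have hlast' : (L.map Subtype.val).getLast hmapne = (v : V) := by
    have hgl : L[L.length - 1]'(by exact Nat.sub_lt (List.length_pos_iff.2 hLne) Nat.one_pos) = v := by
      rw [← List.getLast_eq_getElem]; exact hLl
    rw [List.getLast_eq_getElem]
    have hix : ((L.map Subtype.val).length - 1) = L.length - 1 := by rw [hmaplen]
    rw [getElem_congr' _ hix _, List.getElem_map, hgl]
  have hfin := main_aux hchordal hgem (G.dist (u : V) (v : V)) (u : V) (v : V) rfl
    (L.map Subtype.val) hmapne hind' hhead' hlast'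
  rw [hmaplen, hLlen] at hfin
  omega

end DHAux

theorem stmt17 {V : Type*} [Fintype V] (G : SimpleGraph V)
    (hchordal : ∀ C : List V, ¬ IsHole G C) (hgem : GemFree G) :
    ∀ s : Set V, (G.induce s).Connected →
      ∀ u v : ↥s, (G.induce s).dist u v = G.dist (u : V) (v : V) := by
  exact DHAux.stmt17_aux G hchordal hgem
end
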